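/- The cdf vector F(x) = (F₀(x), F₁(x)) with F₀(x) = π₀ + α₁(1-c)e^{z₁x}, F₁(x) = π₁ + α₁ c e^{z₁x} (where π₀ = 1/(1+χ), π₁ = χ/(1+χ), α₁ = -χ/(c(1+χ)), z₁ = χ/c - 1/(1-c)) satisfies the differential equation F'(x) D = F(x) M componentwise, where D = diag(-cμ, (1-c)μ) and M = [[-λ, λ], [μ, -μ]], χ = λ/μ. -/

import Mathlib

theorem stmt_13 (lam mu c : ℝ) (hlam : 0 < lam) (hmu : 0 < mu)
    (hc0 : 0 < c) (hc1 : c < 1)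
    (chi z1 alpha1 pi0 pi1 : ℝ) (hchi : chi = lam / mu)
    (hz1 : z1 = chi / c - 1 / (1 - c))
    (halpha : alpha1 = -chi / (c * (1 + chi)))
    (hpi0 : pi0 = 1 / (1 + chi)) (hpi1 : pi1 = chi / (1 + chi))
    (F0 F1 : ℝ → ℝ)
    (hF0 : ∀ x, F0 x = pi0 + alpha1 * (1 - c) * Real.exp (z1 * x))
    (hF1 : ∀ x, F1 x = pi1 + alpha1 * c * Real.exp (z1 * x)) :
    ∀ x : ℝ,
      deriv F0 x * (-(c * mu)) = F0 x * (-lam) + F1 x * mu ∧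
      deriv F1 x * ((1 - c) * mu) = F0 x * lam + F1 x * (-mu) := by
  intro x
  have hF0' : F0 = fun x => pi0 + alpha1 * (1 - c) * Real.exp (z1 * x) := funext hF0
  have hF1' : F1 = fun x => pi1 + alpha1 * c * Real.exp (z1 * x) := funext hF1
  have hexp : HasDerivAt (fun x => Real.exp (z1 * x)) (Real.exp (z1 * x) * z1) x := by
    simpa [mul_comm, Function.comp_def] using (Real.hasDerivAt_exp (z1 * x)).comp x
      ((hasDerivAt_id x).const_mul z1)
  have hd0 : deriv F0 x = alpha1 * (1 - c) * (Real.exp (z1 * x) * z1) := by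
    rw [hF0']
    exact (((hexp.const_mul (alpha1 * (1 - c))).const_add pi0)).deriv
  have hd1 : deriv F1 x = alpha1 * c * (Real.exp (z1 * x) * z1) := by
    rw [hF1']
    exact (((hexp.const_mul (alpha1 * c)).const_add pi1)).deriv
  have hcne : c ≠ 0 := hc0.ne'
  have h1c : (1 : ℝ) - c ≠ 0 := by linarith
  have hmune : mu ≠ 0 := hmu.ne'
  have hchipos : (0 : ℝ) < 1 + chi := by
    have : 0 < chi := by rw [hchi]; positivity
    linarith
  have hchine : (1 : ℝ) + chi ≠ 0 := hchipos.ne'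
  have hlm : lam = chi * mu := by rw [hchi]; field_simp
  constructor
  · rw [hd0, hF0 x, hF1 x, hpi0, hpi1, halpha, hz1, hlm]
    field_simp
    ring
  · rw [hd1, hF0 x, hF1 x, hpi0, hpi1, halpha, hz1, hlm]
    field_simp
    ring
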